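/- For every integer k ≥ 2, every hypertree k-metric is a coboundary k-metric with respect to the ℓ_1 norm: if (X, d) is the hypertree k-metric associated with a (k−1)-hypertree T on X with nonnegative weights w, then there exists an integer m ≥ 1 such that (X, d) ∈ C_{k,1}^m. -/

import Mathlib

open scoped BigOperators

/-- An alternating real-valued function on `j`-tuples of `X`
(a `(j-1)`-dimensional chain on the complete complex on `X`). -/
def AltChain {X : Type*} {j : ℕ} (α : (Fin j → X) → ℝ) : Prop :=
  ∀ (π : Equiv.Perm (Fin j)) (x : Fin j → X),
    α (x ∘ π) = ((Equiv.Perm.sign π : ℤ) : ℝ) * α x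

/-- The boundary operator: `(∂α)(y₁,…,y_j) = ∑_{x ∈ X} α(x, y₁, …, y_j)`. -/
noncomputable def bdry {X : Type*} [Fintype X] {j : ℕ}
    (α : (Fin (j + 1) → X) → ℝ) : (Fin j → X) → ℝ :=
  fun y => ∑ x : X, α (Fin.cons x y)

/-- The elementary chain `1_t`: value `sign π` on the reordering of `t` by `π`,
and `0` on all other tuples. -/
noncomputable def unitChain {X : Type*} [DecidableEq X] {j : ℕ} (t : Fin j → X) :
    (Fin j → X) → ℝ :=
  fun s => ∑ π : Equiv.Perm (Fin j),
    if s = t ∘ π then ((Equiv.Perm.sign π : ℤ) : ℝ) else 0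

/-- The coboundary operator:
`(δf)(x₁,…,x_{j+2}) = ∑ᵢ (-1)^(i+1) f(x₁,…,x̂ᵢ,…,x_{j+2})` (`0`-indexed sign `(-1)^i`). -/
noncomputable def cobdry {X : Type*} {j : ℕ}
    (f : (Fin (j + 1) → X) → ℝ) : (Fin (j + 2) → X) → ℝ :=
  fun x => ∑ i : Fin (j + 2), (-1 : ℝ) ^ (i : ℕ) * f (x ∘ i.succAbove)

/-- A pseudo metric of arity `K` (a pseudo `K`-metric): nonnegative, vanishing on
non-injective tuples, permutation invariant, satisfying the simplex inequality. -/
structure IsPseudoMetric {X : Type*} (K : ℕ) (d : (Fin K → X) → ℝ) : Prop where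
  nonneg : ∀ x, 0 ≤ d x
  eq_zero : ∀ x, ¬ Function.Injective x → d x = 0
  perm : ∀ (π : Equiv.Perm (Fin K)) (x), d (x ∘ π) = d x
  simplex : ∀ (x : Fin K → X) (y : X),
    d x ≤ ∑ i : Fin K, d (Function.update x i y)

/-- A strong pseudo metric of arity `k + 1` (a strong pseudo `(k+1)`-metric).
The strong simplex inequality `d t ≤ ∑_τ |α(τ)| * d(τ)` (with the sum over
`(k+1)`-element subsets `τ` of `X`, each evaluated on any fixed ordering of `τ`)
is stated in the equivalent form `(k+1)! * d t ≤ ∑_s |α(s)| * d(s)` with the sum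
over all `(k+1)`-tuples `s`: since `α` is alternating and `d` is permutation
invariant, the summand depends only on the underlying set of `s` (it vanishes on
tuples with repeated entries), and each `(k+1)`-element subset has exactly
`(k+1)!` orderings. -/
structure IsStrongPseudoMetric {X : Type*} [Fintype X] [DecidableEq X] (k : ℕ)
    (d : (Fin (k + 1) → X) → ℝ) : Prop where
  nonneg : ∀ x, 0 ≤ d x
  eq_zero : ∀ x, ¬ Function.Injective x → d x = 0
  perm : ∀ (π : Equiv.Perm (Fin (k + 1))) (x), d (x ∘ π) = d x
  strong_simplex : ∀ t : Fin (k + 1) → X, Function.Injective t →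
    ∀ α : (Fin (k + 1) → X) → ℝ, AltChain α → bdry α = bdry (unitChain t) →
      ((k + 1).factorial : ℝ) * d t ≤ ∑ s : Fin (k + 1) → X, |α s| * d s

/-- `(X, d)` is a coboundary metric of arity `k + 2` in `m` dimensions with respect
to the norm `ν` on `ℝ^m`: there are chains `f 1, …, f m` on `(k+1)`-tuples (i.e.
`(k+2)-2`-dimensional chains for arity `k+2`) whose simultaneous coboundary
realizes `d` on injective tuples, and `d` vanishes on non-injective tuples. -/
def IsCoboundaryMetric {X : Type*} (k m : ℕ) (ν : (Fin m → ℝ) → ℝ)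
    (d : (Fin (k + 2) → X) → ℝ) : Prop :=
  ∃ f : Fin m → ((Fin (k + 1) → X) → ℝ),
    (∀ i, AltChain (f i)) ∧
    (∀ x, Function.Injective x → d x = ν (fun i => cobdry (f i) x)) ∧
    (∀ x, ¬ Function.Injective x → d x = 0)

/-- `ν` is a norm on `ℝ^m`. -/
structure IsNorm {m : ℕ} (ν : (Fin m → ℝ) → ℝ) : Prop where
  nonneg : ∀ x, 0 ≤ ν x
  eq_zero_iff : ∀ x, ν x = 0 ↔ x = 0
  homog : ∀ (c : ℝ) (x), ν (c • x) = |c| * ν x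
  triangle : ∀ x y, ν (x + y) ≤ ν x + ν y

/-- The `ℓ_p` norm on `ℝ^m` for real `p`. -/
noncomputable def lpNorm (p : ℝ) {m : ℕ} (x : Fin m → ℝ) : ℝ :=
  (∑ i, |x i| ^ p) ^ (1 / p)

/-- The `ℓ_1` norm on `ℝ^m`. -/
noncomputable def l1Norm {m : ℕ} (x : Fin m → ℝ) : ℝ := ∑ i, |x i|

/-- The `ℓ_2` (Euclidean) norm on `ℝ^m`. -/
noncomputable def l2Norm {m : ℕ} (x : Fin m → ℝ) : ℝ := Real.sqrt (∑ i, x i ^ 2)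

/-- The `ℓ_∞` norm on `ℝ^m` (the sup norm, which is the norm of `Fin m → ℝ`). -/
noncomputable def linfNorm {m : ℕ} (x : Fin m → ℝ) : ℝ := ‖x‖

/- The apex extension of `d` (of arity `K`), with the apex being
`none : Option X` (a new element not in `X`): on an injective `(K+1)`-tuple
containing the apex in position `i` it is `d` of the tuple with position `i`
removed, and it is `0` on all other tuples. -/
open Classical in
noncomputable def apexExt {X : Type*} {K : ℕ} (d : (Fin K → X) → ℝ) :
    (Fin (K + 1) → Option X) → ℝ := fun x =>
  if h : Function.Injective x ∧ ∃ i, x i = none then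
    d (fun j =>
      Option.get (x ((Classical.choose h.2).succAbove j))
        (by
          rw [Option.isSome_iff_ne_none]
          intro hnone
          exact Fin.succAbove_ne (Classical.choose h.2) j
            (h.1 (hnone.trans (Classical.choose_spec h.2).symm))))
  else 0

/-- The `K`-dimensional volume of the simplex with vertices `y 0, …, y K` in `ℝ^m`:
`(1/K!) * √(det (AᵀA))` where `A` is the `m × K` matrix with columns
`y i - y 0`, `i = 1, …, K`. -/
noncomputable def simplexVolume {m K : ℕ} (y : Fin (K + 1) → (Fin m → ℝ)) : ℝ :=
  (1 / (K.factorial : ℝ)) *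
    Real.sqrt
      (Matrix.det
        (Matrix.of fun i j : Fin K =>
          ∑ l : Fin m, (y i.succ l - y 0 l) * (y j.succ l - y 0 l)))

/-- A chain on `K`-tuples is supported on a collection `T` of subsets of `X` if it
vanishes on every tuple whose underlying set is not in `T`. -/
def SupportedOn {X : Type*} [DecidableEq X] {K : ℕ} (T : Finset (Finset X))
    (α : (Fin K → X) → ℝ) : Prop :=
  ∀ s : Fin K → X, Finset.image s Finset.univ ∉ T → α s = 0

/-- `T` is a `(k+1)`-hypertree on `X` (for arity `k + 2`): a collection of
`(k+2)`-element subsets such that the only supported chain with zero boundary is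
zero, and every chain on `(k+1)`-tuples with zero boundary is the boundary of a
supported chain. -/
def IsHypertree {X : Type*} [Fintype X] [DecidableEq X] (k : ℕ)
    (T : Finset (Finset X)) : Prop :=
  (∀ τ ∈ T, τ.card = k + 2) ∧
  (∀ α : (Fin (k + 2) → X) → ℝ, AltChain α → SupportedOn T α →
      bdry α = 0 → α = 0) ∧
  (∀ β : (Fin (k + 1) → X) → ℝ, AltChain β → bdry β = 0 →
      ∃ α : (Fin (k + 2) → X) → ℝ, AltChain α ∧ SupportedOn T α ∧ bdry α = β)

/-- `d` is the hypertree metric of `(T, w)`: it vanishes on non-injective tuples,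
and for an injective tuple `x`, if `α` is the (unique) chain supported on `T` with
`∂α = ∂1ₓ`, then `d x = ∑_{τ ∈ T} |α(τ)| * w(τ)`; as before, the sum over subsets
is stated in the equivalent form `(k+2)! * d x = ∑_s |α(s)| * w(set of s)` with
the sum over all `(k+2)`-tuples `s` (the summand depends only on the underlying
set of `s`, and each `(k+2)`-set has `(k+2)!` orderings). -/
def IsHypertreeMetric {X : Type*} [Fintype X] [DecidableEq X] (k : ℕ)
    (T : Finset (Finset X)) (w : Finset X → ℝ) (d : (Fin (k + 2) → X) → ℝ) :
    Prop :=
  (∀ x : Fin (k + 2) → X, ¬ Function.Injective x → d x = 0) ∧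
  (∀ x : Fin (k + 2) → X, Function.Injective x →
    ∀ α : (Fin (k + 2) → X) → ℝ, AltChain α → SupportedOn T α →
      bdry α = bdry (unitChain x) →
        ((k + 2).factorial : ℝ) * d x =
          ∑ s : Fin (k + 2) → X, |α s| * w (Finset.image s Finset.univ))

namespace Stmt13Aux


/-- real sign -/
def sgn {n : ℕ} (π : Equiv.Perm (Fin n)) : ℝ := ((Equiv.Perm.sign π : ℤ) : ℝ)

lemma sgn_eq_or {n : ℕ} (π : Equiv.Perm (Fin n)) : sgn π = 1 ∨ sgn π = -1 := by
  rcases Int.units_eq_one_or (Equiv.Perm.sign π) with h | h <;> simp [sgn, h]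

lemma sgn_mul {n : ℕ} (π σ : Equiv.Perm (Fin n)) : sgn (π * σ) = sgn π * sgn σ := by
  simp [sgn, map_mul]

lemma sgn_mul_self {n : ℕ} (π : Equiv.Perm (Fin n)) : sgn π * sgn π = 1 := by
  rcases sgn_eq_or π with h | h <;> rw [h] <;> norm_num

lemma sgn_inv {n : ℕ} (π : Equiv.Perm (Fin n)) : sgn π⁻¹ = sgn π := by
  rcases Int.units_eq_one_or (Equiv.Perm.sign π) with h | h <;>
    simp [sgn, map_inv, h]

variable {X : Type*}

lemma altChain_iff {j : ℕ} (α : (Fin j → X) → ℝ) :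
    AltChain α ↔ ∀ (π : Equiv.Perm (Fin j)) (x : Fin j → X), α (x ∘ π) = sgn π * α x :=
  Iff.rfl

lemma altChain_add {j : ℕ} {a b : (Fin j → X) → ℝ} (ha : AltChain a) (hb : AltChain b) :
    AltChain (a + b) := by
  intro π x
  simp only [Pi.add_apply]
  rw [ha, hb]; ring

lemma altChain_zero {j : ℕ} : AltChain (0 : (Fin j → X) → ℝ) := by
  intro π x; simp

lemma altChain_smul {j : ℕ} (c : ℝ) {a : (Fin j → X) → ℝ} (ha : AltChain a) :
    AltChain (c • a) := by
  intro π x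
  simp only [Pi.smul_apply, smul_eq_mul]
  rw [ha]; ring

lemma altChain_sub {j : ℕ} {a b : (Fin j → X) → ℝ} (ha : AltChain a) (hb : AltChain b) :
    AltChain (a - b) := by
  intro π x
  simp only [Pi.sub_apply]
  rw [ha, hb]; ring

lemma altChain_apply_eq_zero {j : ℕ} {a : (Fin j → X) → ℝ} (ha : AltChain a)
    {s : Fin j → X} (hs : ¬ Function.Injective s) : a s = 0 := by
  simp only [Function.Injective, not_forall] at hs
  obtain ⟨i, l, hil, hne⟩ := hs
  have h2 : s ∘ (Equiv.swap i l) = s := by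
    funext m
    simp only [Function.comp_apply, Equiv.swap_apply_def]
    split_ifs with h h'
    · rw [h, ← hil]
    · rw [h', hil]
    · rfl
  have h1 := ha (Equiv.swap i l) s
  rw [h2, Equiv.Perm.sign_swap hne] at h1
  have hc : ((((-1 : ℤˣ) : ℤ)) : ℝ) = -1 := by simp
  rw [hc] at h1
  linarith

section bdryLemma
variable [Fintype X]

lemma bdry_add {j : ℕ} (a b : (Fin (j + 1) → X) → ℝ) :
    bdry (a + b) = bdry a + bdry b := by
  funext y; simp [bdry, Finset.sum_add_distrib]

lemma bdry_sub {j : ℕ} (a b : (Fin (j + 1) → X) → ℝ) :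
    bdry (a - b) = bdry a - bdry b := by
  funext y; simp [bdry, Finset.sum_sub_distrib]

lemma bdry_smul {j : ℕ} (c : ℝ) (a : (Fin (j + 1) → X) → ℝ) :
    bdry (c • a) = c • bdry a := by
  funext y; simp [bdry, Finset.mul_sum]

lemma altChain_bdry {j : ℕ} {a : (Fin (j + 1) → X) → ℝ} (ha : AltChain a) :
    AltChain (bdry a) := by
  intro π y
  have key : ∀ z : X, Fin.cons z (y ∘ π) =
      (Fin.cons z y) ∘ (Equiv.Perm.decomposeFin.symm (0, π)) := by
    intro z; funext m
    refine Fin.cases ?_ (fun l => ?_) m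
    · simp [Equiv.Perm.decomposeFin_symm_apply_zero]
    · simp [Equiv.Perm.decomposeFin_symm_apply_succ]
  show ∑ z : X, a (Fin.cons z (y ∘ π)) = _
  calc ∑ z : X, a (Fin.cons z (y ∘ π))
      = ∑ z : X, sgn (Equiv.Perm.decomposeFin.symm (0, π)) * a (Fin.cons z y) := by
        refine Finset.sum_congr rfl fun z _ => ?_
        rw [key z]; exact ha _ _
    _ = ((Equiv.Perm.sign π : ℤ) : ℝ) * bdry a y := by
        rw [← Finset.mul_sum]
        congr 1
        simp [sgn, Equiv.Perm.decomposeFin.symm_sign]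

lemma bdry_bdry {j : ℕ} {a : (Fin (j + 2) → X) → ℝ} (ha : AltChain a) :
    bdry (bdry a) = 0 := by
  funext y
  show ∑ z : X, ∑ z' : X, a (Fin.cons z' (Fin.cons z y)) = 0
  have anti : ∀ z z' : X,
      a (Fin.cons z' (Fin.cons z y)) = - a (Fin.cons z (Fin.cons z' y)) := by
    intro z z'
    have h2 : Fin.cons z (Fin.cons z' y) =
        (Fin.cons z' (Fin.cons z y)) ∘ (Equiv.swap (0 : Fin (j + 2)) 1) := by
      funext m
      refine Fin.cases ?_ (fun l => ?_) m
      · simp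
      · refine Fin.cases ?_ (fun l' => ?_) l
        · simp
        · have e1 : Equiv.swap (0 : Fin (j + 2)) 1 l'.succ.succ = l'.succ.succ := by
            refine Equiv.swap_apply_of_ne_of_ne (Fin.succ_ne_zero _) ?_
            rw [← Fin.succ_zero_eq_one]
            exact fun h => Fin.succ_ne_zero l' (Fin.succ_injective _ h)
          simp [e1]
    have h01 : (0 : Fin (j + 2)) ≠ 1 := by
      intro h
      simpa using congrArg Fin.val h
    have h1 := ha (Equiv.swap (0 : Fin (j + 2)) 1) (Fin.cons z' (Fin.cons z y))
    rw [← h2, Equiv.Perm.sign_swap h01] at h1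
    rw [h1]; push_cast; ring
  have hS : (∑ z : X, ∑ z' : X, a (Fin.cons z' (Fin.cons z y)))
      = - ∑ z : X, ∑ z' : X, a (Fin.cons z' (Fin.cons z y)) := by
    calc (∑ z : X, ∑ z' : X, a (Fin.cons z' (Fin.cons z y)))
        = ∑ z : X, ∑ z' : X, - a (Fin.cons z (Fin.cons z' y)) :=
          Finset.sum_congr rfl fun z _ => Finset.sum_congr rfl fun z' _ => anti z z'
      _ = - ∑ z : X, ∑ z' : X, a (Fin.cons z (Fin.cons z' y)) := by
          simp [Finset.sum_neg_distrib]
      _ = - ∑ z : X, ∑ z' : X, a (Fin.cons z' (Fin.cons z y)) := by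
          rw [Finset.sum_comm]
  linarith

end bdryLemma


section part2
variable {X : Type*}


/-- `unitChain` is alternating. -/
lemma altChain_unitChain [DecidableEq X] {j : ℕ} (t : Fin j → X) :
    AltChain (unitChain t) := by
  intro π s
  show (∑ σ : Equiv.Perm (Fin j), if s ∘ ⇑π = t ∘ ⇑σ then sgn σ else 0)
      = sgn π * ∑ σ : Equiv.Perm (Fin j), if s = t ∘ ⇑σ then sgn σ else 0
  rw [Finset.mul_sum]
  refine Fintype.sum_equiv (Equiv.mulRight π⁻¹) _ _ fun σ => ?_
  have hiff : (s ∘ ⇑π = t ∘ ⇑σ) ↔ (s = t ∘ ⇑(σ * π⁻¹)) := by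
    constructor
    · intro h
      funext m
      have := congrFun h (π⁻¹ m)
      simpa using this
    · intro h
      funext m
      have := congrFun h (π m)
      simpa using this
  change (if s ∘ ⇑π = t ∘ ⇑σ then sgn σ else 0)
    = sgn π * (if s = t ∘ ⇑(σ * π⁻¹) then sgn (σ * π⁻¹) else 0)
  split_ifs with h1 h2 h2
  · rw [sgn_mul, sgn_inv]
    rcases sgn_eq_or π with h3 | h3 <;> rw [h3] <;> ring
  · exact absurd (hiff.mp h1) h2
  · exact absurd (hiff.mpr h2) h1
  · ring

/-- `unitChain` of a permuted tuple. -/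
lemma unitChain_comp_perm [DecidableEq X] {j : ℕ} (t : Fin j → X) (π : Equiv.Perm (Fin j)) :
    unitChain (t ∘ ⇑π) = sgn π • unitChain t := by
  funext s
  show (∑ σ : Equiv.Perm (Fin j), if s = t ∘ ⇑π ∘ ⇑σ then sgn σ else 0)
      = sgn π * ∑ σ : Equiv.Perm (Fin j), if s = t ∘ ⇑σ then sgn σ else 0
  rw [Finset.mul_sum]
  refine Fintype.sum_equiv (Equiv.mulLeft π) _ _ fun σ => ?_
  have hc : t ∘ ⇑π ∘ ⇑σ = t ∘ ⇑(π * σ) := rfl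
  rw [hc]
  change (if s = t ∘ ⇑(π * σ) then sgn σ else 0)
    = sgn π * (if s = t ∘ ⇑(π * σ) then sgn (π * σ) else 0)
  split_ifs with h
  · rcases sgn_eq_or π with h1 | h1 <;> rw [sgn_mul, h1] <;> ring
  · ring

/-- Decomposition of a permutation of `Fin (n+1)` into the image of `0` and a
permutation of `Fin n`. -/
def permDecomp (n : ℕ) : (Fin (n + 1)) × Equiv.Perm (Fin n) ≃ Equiv.Perm (Fin (n + 1)) where
  toFun p := p.1.cycleRange⁻¹ * Equiv.Perm.decomposeFin.symm (0, p.2)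
  invFun π := (π 0, (Equiv.Perm.decomposeFin ((π 0).cycleRange * π)).2)
  left_inv := by
    rintro ⟨i, σ⟩
    have h0 : (i.cycleRange⁻¹ * Equiv.Perm.decomposeFin.symm (0, σ)) 0 = i := by
      simp only [Equiv.Perm.mul_apply, Equiv.Perm.decomposeFin_symm_apply_zero]
      rw [Equiv.Perm.inv_def, Fin.cycleRange_symm_zero]
    simp only [h0]
    rw [mul_inv_cancel_left, Equiv.apply_symm_apply]
  right_inv := by
    intro π
    have hfst : ∀ ρ : Equiv.Perm (Fin (n + 1)), (Equiv.Perm.decomposeFin ρ).1 = ρ 0 := by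
      intro ρ
      conv_rhs => rw [← Equiv.symm_apply_apply Equiv.Perm.decomposeFin ρ]
      rw [show Equiv.Perm.decomposeFin ρ =
        ((Equiv.Perm.decomposeFin ρ).1, (Equiv.Perm.decomposeFin ρ).2) from rfl,
        Equiv.Perm.decomposeFin_symm_apply_zero]
    have h1 : (Equiv.Perm.decomposeFin ((π 0).cycleRange * π)).1 = 0 := by
      rw [hfst]
      simp [Fin.cycleRange_self]
    have h2 : ((0 : Fin (n + 1)), (Equiv.Perm.decomposeFin ((π 0).cycleRange * π)).2)
        = Equiv.Perm.decomposeFin ((π 0).cycleRange * π) := by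
      have := h1.symm
      exact Prod.ext this rfl
    simp only
    rw [h2, Equiv.symm_apply_apply, inv_mul_cancel_left]

lemma permDecomp_apply_succ (n : ℕ) (i : Fin (n + 1)) (σ : Equiv.Perm (Fin n)) (j : Fin n) :
    (permDecomp n (i, σ)) (Fin.succ j) = i.succAbove (σ j) := by
  show (i.cycleRange⁻¹ * Equiv.Perm.decomposeFin.symm (0, σ)) (Fin.succ j) = _
  simp only [Equiv.Perm.mul_apply, Equiv.Perm.decomposeFin_symm_apply_succ,
    Equiv.swap_self, Equiv.refl_apply]
  rw [Equiv.Perm.inv_def, Fin.cycleRange_symm_succ]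

lemma sgn_permDecomp (n : ℕ) (i : Fin (n + 1)) (σ : Equiv.Perm (Fin n)) :
    sgn (permDecomp n (i, σ)) = (-1 : ℝ) ^ (i : ℕ) * sgn σ := by
  show sgn (i.cycleRange⁻¹ * Equiv.Perm.decomposeFin.symm (0, σ)) = _
  rw [sgn_mul, sgn_inv]
  congr 1
  · simp [sgn, Fin.sign_cycleRange]
  · simp [sgn, Equiv.Perm.decomposeFin.symm_sign]


/-- The boundary of a unit chain is the alternating sum of the unit chains of
the faces. -/
lemma bdry_unitChain [Fintype X] [DecidableEq X] {n : ℕ} (x : Fin (n + 1) → X) :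
    bdry (unitChain x)
      = ∑ i : Fin (n + 1), ((-1 : ℝ) ^ (i : ℕ)) • unitChain (x ∘ i.succAbove) := by
  funext y
  rw [Finset.sum_apply]
  simp only [Pi.smul_apply, smul_eq_mul]
  show (∑ z : X, ∑ π : Equiv.Perm (Fin (n + 1)),
      if Fin.cons z y = x ∘ ⇑π then sgn π else 0) = _
  rw [Finset.sum_comm]
  have step1 : ∀ π : Equiv.Perm (Fin (n + 1)),
      (∑ z : X, if Fin.cons z y = x ∘ ⇑π then sgn π else 0)
        = if y = x ∘ ⇑π ∘ Fin.succ then sgn π else 0 := by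
    intro π
    have hiff : ∀ z : X,
        (Fin.cons z y = x ∘ ⇑π) ↔ (z = x (π 0) ∧ y = x ∘ ⇑π ∘ Fin.succ) := by
      intro z
      constructor
      · intro h
        refine ⟨?_, ?_⟩
        · have := congrFun h 0; simpa using this
        · funext l
          have := congrFun h (Fin.succ l); simpa using this
      · rintro ⟨hz, hy⟩
        funext m
        refine Fin.cases ?_ (fun l => ?_) m
        · simpa using hz
        · simpa using congrFun hy l
    by_cases hy : y = x ∘ ⇑π ∘ Fin.succ
    · rw [if_pos hy]
      calc (∑ z : X, if Fin.cons z y = x ∘ ⇑π then sgn π else 0)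
          = ∑ z : X, if z = x (π 0) then sgn π else 0 := by
            refine Finset.sum_congr rfl fun z _ => ?_
            rw [if_congr ((hiff z).trans (and_iff_left hy)) rfl rfl]
        _ = sgn π := by
            rw [Finset.sum_ite_eq' Finset.univ (x (π 0)) (fun _ => sgn π)]
            simp
    · rw [if_neg hy]
      refine Finset.sum_eq_zero fun z _ => ?_
      rw [if_neg]
      intro h
      exact hy ((hiff z).mp h).2
  rw [Finset.sum_congr rfl fun π _ => step1 π]
  rw [← Equiv.sum_comp (permDecomp n)
    (fun π => if y = x ∘ ⇑π ∘ Fin.succ then sgn π else 0), Fintype.sum_prod_type]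
  refine Finset.sum_congr rfl fun i _ => ?_
  show _ = (-1 : ℝ) ^ (i : ℕ) *
      ∑ σ : Equiv.Perm (Fin n), if y = (x ∘ i.succAbove) ∘ ⇑σ then sgn σ else 0
  rw [Finset.mul_sum]
  refine Finset.sum_congr rfl fun σ _ => ?_
  have hcomp : x ∘ ⇑(permDecomp n (i, σ)) ∘ Fin.succ = (x ∘ i.succAbove) ∘ ⇑σ := by
    funext l
    simp [Function.comp, permDecomp_apply_succ]
  rw [hcomp, sgn_permDecomp, mul_ite, mul_zero]


end part2
end Stmt13Aux

/-- every hypertree metric (of arity `k + 2`) is a coboundary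
metric with respect to the `ℓ_1` norm, in some dimension `m ≥ 1`. -/
theorem stmt_13 (k : ℕ) {X : Type*} [Fintype X] [DecidableEq X]
    (T : Finset (Finset X)) (hT : IsHypertree k T)
    (w : Finset X → ℝ) (hw : ∀ τ ∈ T, 0 ≤ w τ)
    (d : (Fin (k + 2) → X) → ℝ) (hd : IsHypertreeMetric k T w d) :
    ∃ m : ℕ, 1 ≤ m ∧ IsCoboundaryMetric k m l1Norm d := by
  classical
  obtain ⟨hcard, huniq, hexist⟩ := hT
  obtain ⟨hd1, hd2⟩ := hd
  have uniq : ∀ α α' : (Fin (k + 2) → X) → ℝ, AltChain α → AltChain α' →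
      SupportedOn T α → SupportedOn T α' → bdry α = bdry α' → α = α' := by
    intro α α' hα hα' hs hs' hb
    have h2 : SupportedOn T (α - α') := fun s hs0 => by
      simp [Pi.sub_apply, hs s hs0, hs' s hs0]
    have h3 : bdry (α - α') = 0 := by
      rw [Stmt13Aux.bdry_sub, hb, sub_self]
    have h4 := huniq _ (Stmt13Aux.altChain_sub hα hα') h2 h3
    funext s
    have h5 := congrFun h4 s
    simpa [sub_eq_zero] using h5
  -- the submodule of alternating cycles
  let Z : Submodule ℝ ((Fin (k + 1) → X) → ℝ) :=
    { carrier := {β | AltChain β ∧ bdry β = 0}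
      add_mem' := fun ha hb => ⟨Stmt13Aux.altChain_add ha.1 hb.1, by
        rw [Stmt13Aux.bdry_add, ha.2, hb.2, add_zero]⟩
      zero_mem' := ⟨Stmt13Aux.altChain_zero, by funext y; simp [bdry]⟩
      smul_mem' := fun c a ha => ⟨Stmt13Aux.altChain_smul c ha.1, by
        rw [Stmt13Aux.bdry_smul, ha.2, smul_zero]⟩ }
  have memZ : ∀ β : (Fin (k + 1) → X) → ℝ, β ∈ Z ↔ AltChain β ∧ bdry β = 0 :=
    fun β => Iff.rfl
  let res : Z → ((Fin (k + 2) → X) → ℝ) := fun b =>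
    Classical.choose (hexist b.1 ((memZ b.1).mp b.2).1 ((memZ b.1).mp b.2).2)
  have hres : ∀ b : Z, AltChain (res b) ∧ SupportedOn T (res b) ∧ bdry (res b) = b.1 :=
    fun b => Classical.choose_spec (hexist b.1 ((memZ b.1).mp b.2).1 ((memZ b.1).mp b.2).2)
  have res_add : ∀ a b : Z, res (a + b) = res a + res b := by
    intro a b
    refine uniq _ _ (hres (a + b)).1 (Stmt13Aux.altChain_add (hres a).1 (hres b).1)
      (hres (a + b)).2.1
      (fun s hs0 => by simp [Pi.add_apply, (hres a).2.1 s hs0, (hres b).2.1 s hs0]) ?_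
    rw [(hres (a + b)).2.2, Stmt13Aux.bdry_add, (hres a).2.2, (hres b).2.2]
    rfl
  have res_smul : ∀ (c : ℝ) (a : Z), res (c • a) = c • res a := by
    intro c a
    refine uniq _ _ (hres (c • a)).1 (Stmt13Aux.altChain_smul c (hres a).1)
      (hres (c • a)).2.1
      (fun s hs0 => by simp [Pi.smul_apply, (hres a).2.1 s hs0]) ?_
    rw [(hres (c • a)).2.2, Stmt13Aux.bdry_smul, (hres a).2.2]
    rfl
  -- fixed orderings of the hypertree cells
  have htup : ∀ τ : Finset X, τ ∈ T →
      ∃ t : Fin (k + 2) → X, Function.Injective t ∧ Finset.image t Finset.univ = τ := by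
    intro τ hτ
    have hc : τ.card = k + 2 := hcard τ hτ
    set t : Fin (k + 2) → X := fun j => (τ.equivFin.symm (Fin.cast hc.symm j) : X) with ht
    have hinj : Function.Injective t := by
      intro a b hab
      have h1 : τ.equivFin.symm (Fin.cast hc.symm a) = τ.equivFin.symm (Fin.cast hc.symm b) :=
        Subtype.ext hab
      have h2 := τ.equivFin.symm.injective h1
      exact Fin.ext (by simpa using congrArg Fin.val h2)
    refine ⟨t, hinj, ?_⟩
    apply Finset.eq_of_subset_of_card_le
    · intro u hu
      simp only [Finset.mem_image] at hu
      obtain ⟨j, _, rfl⟩ := hu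
      exact (τ.equivFin.symm (Fin.cast hc.symm j)).2
    · rw [Finset.card_image_of_injective _ hinj, Finset.card_univ, Fintype.card_fin, hc]
  choose tt tt_inj tt_im using htup
  -- linear functionals extending the resolution evaluations
  have hM : ∀ τ : {τ : Finset X // τ ∈ T},
      ∃ g : ((Fin (k + 1) → X) → ℝ) →ₗ[ℝ] ℝ, ∀ b : Z, g b.1 = res b (tt τ.1 τ.2) := by
    intro τ
    obtain ⟨g, hg⟩ := LinearMap.exists_extend
      ({ toFun := fun b => res b (tt τ.1 τ.2)
         map_add' := fun a b => by
           show res (a + b) (tt τ.1 τ.2) = res a (tt τ.1 τ.2) + res b (tt τ.1 τ.2)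
           rw [res_add]; rfl
         map_smul' := fun c a => by
           show res (c • a) (tt τ.1 τ.2) = c * res a (tt τ.1 τ.2)
           rw [res_smul]; rfl } : Z →ₗ[ℝ] ℝ)
    exact ⟨g, fun b => by simpa using LinearMap.congr_fun hg b⟩
  choose M hMspec using hM
  let eT : Fin T.card ≃ {τ : Finset X // τ ∈ T} := T.equivFin.symm
  let f : Fin (T.card + 1) → ((Fin (k + 1) → X) → ℝ) := fun i =>
    if h : (i : ℕ) < T.card then
      fun y => w (eT ⟨i, h⟩).1 * M (eT ⟨i, h⟩) (unitChain y)
    else 0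
  have faltaux : ∀ (τ : {τ : Finset X // τ ∈ T}),
      AltChain (fun y : Fin (k + 1) → X => w τ.1 * M τ (unitChain y)) := by
    intro τ π y
    show w τ.1 * M τ (unitChain (y ∘ ⇑π)) = _
    rw [Stmt13Aux.unitChain_comp_perm, map_smul, smul_eq_mul]
    show w τ.1 * (Stmt13Aux.sgn π * M τ (unitChain y))
        = Stmt13Aux.sgn π * (w τ.1 * M τ (unitChain y))
    ring
  refine ⟨T.card + 1, Nat.succ_le_succ (Nat.zero_le _), f, ?_, ?_, hd1⟩
  · intro i
    by_cases h : (i : ℕ) < T.card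
    · rw [show f i = fun y => w (eT ⟨i, h⟩).1 * M (eT ⟨i, h⟩) (unitChain y) from dif_pos h]
      exact faltaux (eT ⟨i, h⟩)
    · rw [show f i = 0 from dif_neg h]
      exact Stmt13Aux.altChain_zero
  · intro x hx
    have hβZ : bdry (unitChain x) ∈ Z :=
      ⟨Stmt13Aux.altChain_bdry (Stmt13Aux.altChain_unitChain x),
       Stmt13Aux.bdry_bdry (Stmt13Aux.altChain_unitChain x)⟩
    let b : Z := ⟨bdry (unitChain x), hβZ⟩
    have hα := hres b
    have hd2' : ((k + 2).factorial : ℝ) * d x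
        = ∑ s : Fin (k + 2) → X, |res b s| * w (Finset.image s Finset.univ) :=
      hd2 x hx (res b) hα.1 hα.2.1 hα.2.2
    -- value of the coboundaries
    have cob : ∀ (τ : {τ : Finset X // τ ∈ T}),
        cobdry (fun y : Fin (k + 1) → X => w τ.1 * M τ (unitChain y)) x
          = w τ.1 * res b (tt τ.1 τ.2) := by
      intro τ
      show (∑ l : Fin (k + 2),
          (-1 : ℝ) ^ (l : ℕ) * (w τ.1 * M τ (unitChain (x ∘ l.succAbove)))) = _
      have hterm : ∀ l : Fin (k + 2),
          (-1 : ℝ) ^ (l : ℕ) * (w τ.1 * M τ (unitChain (x ∘ l.succAbove)))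
            = w τ.1 * M τ (((-1 : ℝ) ^ (l : ℕ)) • unitChain (x ∘ l.succAbove)) := by
        intro l
        rw [map_smul, smul_eq_mul]; ring
      rw [Finset.sum_congr rfl fun l _ => hterm l, ← Finset.mul_sum, ← map_sum,
        ← Stmt13Aux.bdry_unitChain]
      exact congrArg (fun r => w τ.1 * r) (hMspec τ b)
    have cob' : ∀ i : Fin (T.card + 1),
        |cobdry (f i) x| = if h : (i : ℕ) < T.card then
          w (eT ⟨i, h⟩).1 * |res b (tt (eT ⟨i, h⟩).1 (eT ⟨i, h⟩).2)| else 0 := by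
      intro i
      by_cases h : (i : ℕ) < T.card
      · rw [dif_pos h,
          show f i = fun y => w (eT ⟨i, h⟩).1 * M (eT ⟨i, h⟩) (unitChain y) from dif_pos h,
          cob (eT ⟨i, h⟩), abs_mul, abs_of_nonneg (hw _ (eT ⟨i, h⟩).2)]
      · rw [dif_neg h, show f i = 0 from dif_neg h]
        simp [cobdry]
    -- the right-hand side sum
    have hrhs : (∑ i : Fin (T.card + 1), |cobdry (f i) x|)
        = ∑ τ : {τ : Finset X // τ ∈ T}, w τ.1 * |res b (tt τ.1 τ.2)| := by
      rw [Finset.sum_congr rfl fun i _ => cob' i]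
      rw [Fin.sum_univ_castSucc]
      have h1 : (if h : ((Fin.last T.card : Fin (T.card + 1)) : ℕ) < T.card then
          w (eT ⟨(Fin.last T.card : Fin (T.card + 1)), h⟩).1 *
            |res b (tt (eT ⟨_, h⟩).1 (eT ⟨_, h⟩).2)| else 0) = 0 := by
        rw [dif_neg]
        simp [Fin.last]
      rw [h1, add_zero]
      rw [← Equiv.sum_comp eT (fun τ => w τ.1 * |res b (tt τ.1 τ.2)|)]
      refine Finset.sum_congr rfl fun i _ => ?_
      have hi : ((Fin.castSucc i : Fin (T.card + 1)) : ℕ) < T.card := by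
        simp only [Fin.coe_castSucc]
        exact i.2
      rw [dif_pos hi]
      have : (⟨((Fin.castSucc i : Fin (T.card + 1)) : ℕ), hi⟩ : Fin T.card) = i :=
        Fin.ext (by simp)
      rw [this]
    -- the left-hand side sum
    have st1 : (∑ s : Fin (k + 2) → X, |res b s| * w (Finset.image s Finset.univ))
        = ∑ s ∈ Finset.univ.filter
            (fun s : Fin (k + 2) → X => Finset.image s Finset.univ ∈ T),
            |res b s| * w (Finset.image s Finset.univ) := by
      symm
      apply Finset.sum_filter_of_ne
      intro s _ hne
      by_contra hmem
      exact hne (by rw [hα.2.1 s hmem]; simp)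
    have st2 : (∑ s ∈ Finset.univ.filter
            (fun s : Fin (k + 2) → X => Finset.image s Finset.univ ∈ T),
            |res b s| * w (Finset.image s Finset.univ))
        = ∑ τ ∈ T, ∑ s ∈ (Finset.univ.filter
            (fun s : Fin (k + 2) → X => Finset.image s Finset.univ ∈ T)).filter
              (fun s => Finset.image s Finset.univ = τ),
            |res b s| * w (Finset.image s Finset.univ) := by
      symm
      apply Finset.sum_fiberwise_of_maps_to
      intro s hs
      exact (Finset.mem_filter.mp hs).2
    have st3 : ∀ τ : {τ : Finset X // τ ∈ T},
        (∑ s ∈ (Finset.univ.filter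
            (fun s : Fin (k + 2) → X => Finset.image s Finset.univ ∈ T)).filter
              (fun s => Finset.image s Finset.univ = τ.1),
            |res b s| * w (Finset.image s Finset.univ))
          = ((k + 2).factorial : ℝ) * (w τ.1 * |res b (tt τ.1 τ.2)|) := by
      intro τ
      have hset : (Finset.univ.filter
            (fun s : Fin (k + 2) → X => Finset.image s Finset.univ ∈ T)).filter
              (fun s => Finset.image s Finset.univ = τ.1)
          = Finset.univ.filter
              (fun s : Fin (k + 2) → X => Finset.image s Finset.univ = τ.1) := by
        ext s
        simp only [Finset.mem_filter, Finset.mem_univ, true_and]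
        constructor
        · rintro ⟨_, h⟩; exact h
        · intro h; exact ⟨h ▸ τ.2, h⟩
      rw [hset]
      have hbij : (∑ s ∈ Finset.univ.filter
            (fun s : Fin (k + 2) → X => Finset.image s Finset.univ = τ.1),
            |res b s| * w (Finset.image s Finset.univ))
          = ∑ _π : Equiv.Perm (Fin (k + 2)), w τ.1 * |res b (tt τ.1 τ.2)| := by
        symm
        refine Finset.sum_bij (fun π _ => tt τ.1 τ.2 ∘ ⇑π) ?_ ?_ ?_ ?_
        · intro π _
          simp only [Finset.mem_filter, Finset.mem_univ, true_and]
          rw [show Finset.image (tt τ.1 τ.2 ∘ ⇑π) Finset.univ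
              = Finset.image (tt τ.1 τ.2) (Finset.image (⇑π) Finset.univ) from
              (Finset.image_image).symm, Finset.image_univ_equiv, tt_im τ.1 τ.2]
        · intro π1 _ π2 _ hps
          apply Equiv.ext
          intro m
          exact tt_inj τ.1 τ.2 (congrFun hps m)
        · intro s hs
          simp only [Finset.mem_filter, Finset.mem_univ, true_and] at hs
          have hcardim : (Finset.image s Finset.univ).card = (Finset.univ : Finset (Fin (k + 2))).card := by
            rw [hs, hcard τ.1 τ.2, Finset.card_univ, Fintype.card_fin]
          have hinjs : Function.Injective s := by
            have h2 := Finset.injOn_of_card_image_eq hcardim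
            intro a1 a2 h12
            exact h2 (Finset.mem_coe.mpr (Finset.mem_univ a1))
              (Finset.mem_coe.mpr (Finset.mem_univ a2)) h12
          have hex : ∀ m : Fin (k + 2), ∃ l : Fin (k + 2), tt τ.1 τ.2 l = s m := by
            intro m
            have hm : s m ∈ Finset.image (tt τ.1 τ.2) Finset.univ := by
              rw [tt_im τ.1 τ.2, ← hs]
              exact Finset.mem_image_of_mem s (Finset.mem_univ m)
            obtain ⟨l, _, hl⟩ := Finset.mem_image.mp hm
            exact ⟨l, hl⟩
          choose pf hpf using hex
          have hpinj : Function.Injective pf := by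
            intro a1 a2 h12
            apply hinjs
            rw [← hpf a1, ← hpf a2, h12]
          have hpbij : Function.Bijective pf := Finite.injective_iff_bijective.mp hpinj
          refine ⟨Equiv.ofBijective pf hpbij, Finset.mem_univ _, ?_⟩
          funext m
          exact hpf m
        · intro π _
          rw [show Finset.image (tt τ.1 τ.2 ∘ ⇑π) Finset.univ
              = Finset.image (tt τ.1 τ.2) (Finset.image (⇑π) Finset.univ) from
              (Finset.image_image).symm, Finset.image_univ_equiv, tt_im τ.1 τ.2]
          have halt := hα.1 π (tt τ.1 τ.2)
          rw [halt, abs_mul]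
          have : |((Equiv.Perm.sign π : ℤ) : ℝ)| = 1 := by
            rcases Int.units_eq_one_or (Equiv.Perm.sign π) with h | h <;> simp [h]
          rw [this, one_mul, mul_comm]
      rw [hbij, Finset.sum_const, Finset.card_univ, Fintype.card_perm, Fintype.card_fin,
        nsmul_eq_mul]
    have st4 : (∑ τ ∈ T, ∑ s ∈ (Finset.univ.filter
            (fun s : Fin (k + 2) → X => Finset.image s Finset.univ ∈ T)).filter
              (fun s => Finset.image s Finset.univ = τ),
            |res b s| * w (Finset.image s Finset.univ))
        = ∑ τ : {τ : Finset X // τ ∈ T},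
            ((k + 2).factorial : ℝ) * (w τ.1 * |res b (tt τ.1 τ.2)|) := by
      rw [← Finset.sum_attach T, Finset.univ_eq_attach]
      exact Finset.sum_congr rfl fun τ _ => st3 τ
    have hfinal : ((k + 2).factorial : ℝ) * d x
        = ((k + 2).factorial : ℝ) * ∑ i : Fin (T.card + 1), |cobdry (f i) x| := by
      rw [hd2', st1, st2, st4, hrhs, Finset.mul_sum]
    have hfact : ((k + 2).factorial : ℝ) ≠ 0 := by
      exact_mod_cast Nat.factorial_ne_zero (k + 2)
    have := mul_left_cancel₀ hfact hfinal
    rw [this]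
    rfl
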